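/- Let L be a finite set, S : Set L → ℝ submodular, and let E(a) be the minimal minimizer of S over supersets of a. Then for disjoint a, b ⊆ L with a ∩ E(b) = ∅ and b ∩ E(a) = ∅, if in addition S satisfies S(x\y) + S(y\x) ≤ S(x) + S(y) for all x, y, then E(a) ∩ E(b) = ∅. -/

import Mathlib

lemma minimal_minimizer_mem {L : Type*} [Fintype L] (S : Set L → ℝ)
    (hS : ∀ x y : Set L, S (x ∩ y) + S (x ∪ y) ≤ S x + S y) (a : Set L) :
    ⋂₀ {c | a ⊆ c ∧ ∀ d, a ⊆ d → S c ≤ S d} ∈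
      {c | a ⊆ c ∧ ∀ d, a ⊆ d → S c ≤ S d} := by
  set M : Set (Set L) := {c | a ⊆ c ∧ ∀ d, a ⊆ d → S c ≤ S d} with hM
  -- M is nonempty: a minimizer exists by finiteness
  obtain ⟨m0, hm0, hmin0⟩ := Set.exists_min_image {d : Set L | a ⊆ d} S
    (Set.toFinite _) ⟨a, by simp⟩
  have hm0M : m0 ∈ M := ⟨hm0, fun d hd => hmin0 d hd⟩
  -- pick a ⊆-minimal element of M
  obtain ⟨m, hmM, hmmin⟩ : ∃ m ∈ M, ∀ m' ∈ M, id m' ≤ id m → id m = id m' := by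
    obtain ⟨m, hm⟩ := (Set.toFinite M).exists_minimal ⟨m0, hm0M⟩
    exact ⟨m, hm.1, fun m' hm' h => le_antisymm (hm.2 hm' h) h⟩
  -- M is closed under intersection with m
  have hsub : ∀ c ∈ M, m ⊆ c := by
    intro c hc
    have hint : m ∩ c ∈ M := by
      constructor
      · exact Set.subset_inter hmM.1 hc.1
      · intro d hd
        have h1 := hS m c
        have h2 : S m ≤ S (m ∪ c) := hmM.2 _ (hmM.1.trans Set.subset_union_left)
        have h3 : S c ≤ S d := hc.2 d hd
        linarith
    have := hmmin (m ∩ c) hint (Set.inter_subset_left)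
    simp only [id] at this
    rw [this]
    exact Set.inter_subset_right
  have : ⋂₀ M = m := by
    apply subset_antisymm
    · exact Set.sInter_subset_of_mem hmM
    · exact Set.subset_sInter hsub
  rw [this]
  exact hmM

theorem minimal_minimizer_no_cloning {L : Type*} [Fintype L] (S : Set L → ℝ)
    (hS : ∀ x y : Set L, S (x ∩ y) + S (x ∪ y) ≤ S x + S y)
    (hS' : ∀ x y : Set L, S (x \ y) + S (y \ x) ≤ S x + S y)
    (E : Set L → Set L)
    (hE : ∀ a, E a = ⋂₀ {c | a ⊆ c ∧ ∀ d, a ⊆ d → S c ≤ S d})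
    (a b : Set L) (hdisj : a ∩ b = ∅)
    (hab : a ∩ E b = ∅) (hba : b ∩ E a = ∅) :
    E a ∩ E b = ∅ := by
  have hEa : E a ∈ {c | a ⊆ c ∧ ∀ d, a ⊆ d → S c ≤ S d} := by
    rw [hE]; exact minimal_minimizer_mem S hS a
  have hEb : E b ∈ {c | b ⊆ c ∧ ∀ d, b ⊆ d → S c ≤ S d} := by
    rw [hE]; exact minimal_minimizer_mem S hS b
  have haAB : a ⊆ E a \ E b := fun x hx =>
    ⟨hEa.1 hx, fun hxb => Set.eq_empty_iff_forall_notMem.mp hab x ⟨hx, hxb⟩⟩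
  have hbBA : b ⊆ E b \ E a := fun x hx =>
    ⟨hEb.1 hx, fun hxa => Set.eq_empty_iff_forall_notMem.mp hba x ⟨hx, hxa⟩⟩
  have h1 : S (E a) ≤ S (E a \ E b) := hEa.2 _ haAB
  have h2 : S (E b) ≤ S (E b \ E a) := hEb.2 _ hbBA
  have h3 := hS' (E a) (E b)
  have heq : S (E a \ E b) = S (E a) := by linarith
  have hmemM : E a \ E b ∈ {c | a ⊆ c ∧ ∀ d, a ⊆ d → S c ≤ S d} := by
    refine ⟨haAB, fun d hd => ?_⟩
    rw [heq]; exact hEa.2 d hd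
  have hsub : E a ⊆ E a \ E b := by
    have := Set.sInter_subset_of_mem hmemM
    rwa [← hE a] at this
  ext x
  simp only [Set.mem_inter_iff, Set.mem_empty_iff_false, iff_false]
  rintro ⟨hxa, hxb⟩
  exact (hsub hxa).2 hxb
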